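/- Let p, q'', r'' be three non-collinear points of ℝ² (forming a triangle) such that the interior angles of the triangle at q'' and at r'' are each at most π/2. Let q = q'' + t·(q'' − p) for some real t ≥ 0 and let r = r'' + s·(r'' − p) for some real s ≥ 0 (that is, q lies on the ray starting at q'' with direction q'' − p, and r lies on the ray starting at r'' with direction r'' − p). Then the Euclidean distance between q and r is greater than or equal to the Euclidean distance between q'' and r''. -/

import Mathlib

open InnerProductGeometry in
lemma inner_nonneg_of_angle_le {V : Type*} [NormedAddCommGroup V]
    [InnerProductSpace ℝ V] {x y : V} (h : angle x y ≤ Real.pi / 2) :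
    (0 : ℝ) ≤ inner ℝ x y := by
  rw [← cos_angle_mul_norm_mul_norm]
  have : 0 ≤ Real.cos (angle x y) :=
    Real.cos_nonneg_of_mem_Icc ⟨by linarith [angle_nonneg x y, Real.pi_pos], h⟩
  positivity

/-- Claim 5 of the paper: moving two points away from the apex `p` of a
triangle `p q'' r''` along the two sides, beyond the base, does not decrease
their distance, provided the base angles at `q''` and `r''` are acute
(at most `π/2`). -/
theorem stmt2 (p q'' r'' : EuclideanSpace ℝ (Fin 2))
    (hncol : ¬ Collinear ℝ ({p, q'', r''} : Set (EuclideanSpace ℝ (Fin 2))))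
    (hangq : InnerProductGeometry.angle (p - q'') (r'' - q'') ≤ Real.pi / 2)
    (hangr : InnerProductGeometry.angle (p - r'') (q'' - r'') ≤ Real.pi / 2)
    (t s : ℝ) (ht : 0 ≤ t) (hs : 0 ≤ s)
    (q r : EuclideanSpace ℝ (Fin 2))
    (hq : q = q'' + t • (q'' - p)) (hr : r = r'' + s • (r'' - p)) :
    dist q'' r'' ≤ dist q r := by
  have h1 : (0:ℝ) ≤ inner ℝ (p - q'') (r'' - q'') := inner_nonneg_of_angle_le hangq
  have h2 : (0:ℝ) ≤ inner ℝ (p - r'') (q'' - r'') := inner_nonneg_of_angle_le hangr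
  subst hq hr
  rw [dist_eq_norm, dist_eq_norm]
  have hqr : q'' + t • (q'' - p) - (r'' + s • (r'' - p))
      = (q'' - r'') + (t • (q'' - p) - s • (r'' - p)) := by module
  rw [hqr]
  have key : ‖q'' - r''‖ ^ 2 ≤ ‖(q'' - r'') + (t • (q'' - p) - s • (r'' - p))‖ ^ 2 := by
    rw [norm_add_sq_real]
    have hinner : (0:ℝ) ≤ inner ℝ (q'' - r'') (t • (q'' - p) - s • (r'' - p)) := by
      rw [inner_sub_right, real_inner_smul_right, real_inner_smul_right]
      have e1 : (inner ℝ (q'' - r'') (q'' - p) : ℝ) = inner ℝ (p - q'') (r'' - q'') := by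
        rw [show q'' - r'' = -(r'' - q'') by abel, show q'' - p = -(p - q'') by abel,
          inner_neg_neg, real_inner_comm]
      have e2 : (inner ℝ (q'' - r'') (r'' - p) : ℝ) = -inner ℝ (p - r'') (q'' - r'') := by
        rw [show r'' - p = -(p - r'') by abel, inner_neg_right, real_inner_comm]
      rw [e1, e2]
      have := mul_nonneg ht h1
      have := mul_nonneg hs h2
      nlinarith
    nlinarith [sq_nonneg ‖t • (q'' - p) - s • (r'' - p)‖]
  have := (pow_le_pow_iff_left₀ (norm_nonneg _) (norm_nonneg _) two_ne_zero).mp key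
  exact this
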